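/- Let λ ∈ ℂ be nonzero and B, ω ∈ V, and set φ = λ·e^{B+iω} ∈ W_ℂ. Then ⟨φ, φ⟩ = 0 and ⟨φ, φ̄⟩ = 2·|λ|²·b(ω,ω). In particular, φ satisfies the generalized Calabi–Yau conditions ⟨φ,φ⟩ = 0 and ⟨φ,φ̄⟩ > 0 if and only if b(ω,ω) > 0. -/

import Mathlib

noncomputable section

/-- ℂ-bilinear extension of `b` to `V_ℂ = V × V` (a pair `(x, y)` represents `x + i y`). -/
def bC {V : Type*} [AddCommGroup V] [Module ℝ V]
    (b : V →ₗ[ℝ] V →ₗ[ℝ] ℝ) (φ ψ : V × V) : ℂ :=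
  ⟨b φ.1 ψ.1 - b φ.2 ψ.2, b φ.1 ψ.2 + b φ.2 ψ.1⟩

/-- Complex conjugation on `V_ℂ = V × V`. -/
def conjV {V : Type*} [AddCommGroup V] [Module ℝ V] (φ : V × V) : V × V :=
  (φ.1, -φ.2)

/-- The ℂ-bilinear Mukai pairing on `W_ℂ = ℂ × V_ℂ × ℂ`. -/
def mukaiC {V : Type*} [AddCommGroup V] [Module ℝ V]
    (b : V →ₗ[ℝ] V →ₗ[ℝ] ℝ) (w w' : ℂ × (V × V) × ℂ) : ℂ :=
  bC b w.2.1 w'.2.1 - w.1 * w'.2.2 - w.2.2 * w'.1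

/-- Complex conjugation on `W_ℂ = ℂ × V_ℂ × ℂ`. -/
def conjW {V : Type*} [AddCommGroup V] [Module ℝ V]
    (w : ℂ × (V × V) × ℂ) : ℂ × (V × V) × ℂ :=
  ((starRingEnd ℂ) w.1, conjV w.2.1, (starRingEnd ℂ) w.2.2)

/-- Scalar multiplication by `λ ∈ ℂ` on `V_ℂ = V × V`. -/
def csmul {V : Type*} [AddCommGroup V] [Module ℝ V] (lam : ℂ) (x : V × V) : V × V :=
  (lam.re • x.1 - lam.im • x.2, lam.re • x.2 + lam.im • x.1)

/-- Scalar multiplication by `λ ∈ ℂ` on `W_ℂ = ℂ × V_ℂ × ℂ`. -/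
def smulW {V : Type*} [AddCommGroup V] [Module ℝ V]
    (lam : ℂ) (w : ℂ × (V × V) × ℂ) : ℂ × (V × V) × ℂ :=
  (lam * w.1, csmul lam w.2.1, lam * w.2.2)

/-- `e^{B+iω} = (1, B+iω, ½(b(B,B)−b(ω,ω)) + i·b(B,ω)) ∈ W_ℂ` for `B, ω ∈ V`. -/
def expB {V : Type*} [AddCommGroup V] [Module ℝ V]
    (b : V →ₗ[ℝ] V →ₗ[ℝ] ℝ) (B ω : V) : ℂ × (V × V) × ℂ :=
  (1, (B, ω), ⟨(b B B - b ω ω) / 2, b B ω⟩)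

/-!
Let `λ ∈ ℂ` be nonzero and `B, ω ∈ V`, and `φ = λ·e^{B+iω} ∈ W_ℂ`.
Then `⟨φ,φ⟩ = 0` and `⟨φ,φ̄⟩ = 2|λ|²·b(ω,ω)`; in particular `φ` satisfies the
generalized Calabi–Yau conditions `⟨φ,φ⟩ = 0` and `⟨φ,φ̄⟩ > 0` iff `b(ω,ω) > 0`.
-/

theorem typeA_generalized_CY
    {V : Type*} [AddCommGroup V] [Module ℝ V]
    (b : V →ₗ[ℝ] V →ₗ[ℝ] ℝ) (hsymm : ∀ x y : V, b x y = b y x)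
    (lam : ℂ) (hlam : lam ≠ 0) (B ω : V) :
    mukaiC b (smulW lam (expB b B ω)) (smulW lam (expB b B ω)) = 0 ∧
    mukaiC b (smulW lam (expB b B ω)) (conjW (smulW lam (expB b B ω)))
      = ((2 * ‖lam‖ ^ 2 * b ω ω : ℝ) : ℂ) ∧
    ((mukaiC b (smulW lam (expB b B ω)) (smulW lam (expB b B ω)) = 0 ∧
      0 < (mukaiC b (smulW lam (expB b B ω)) (conjW (smulW lam (expB b B ω)))).re)
      ↔ 0 < b ω ω) := by
  have h1 : mukaiC b (smulW lam (expB b B ω)) (smulW lam (expB b B ω)) = 0 := by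
    simp only [mukaiC, smulW, expB, bC, csmul, conjW, conjV, map_sub, map_add, map_smul,
      LinearMap.sub_apply, LinearMap.add_apply, LinearMap.smul_apply, smul_eq_mul,
      Complex.ext_iff, Complex.sub_re, Complex.sub_im, Complex.mul_re, Complex.mul_im,
      Complex.one_re, Complex.one_im, Complex.zero_re, Complex.zero_im, hsymm B ω]
    constructor <;> ring
  have h2 : mukaiC b (smulW lam (expB b B ω)) (conjW (smulW lam (expB b B ω)))
      = ((2 * ‖lam‖ ^ 2 * b ω ω : ℝ) : ℂ) := by
    simp only [mukaiC, smulW, expB, bC, csmul, conjW, conjV, map_sub, map_add, map_smul,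
      map_neg, LinearMap.sub_apply, LinearMap.add_apply, LinearMap.smul_apply,
      LinearMap.neg_apply, smul_eq_mul, smul_neg, Complex.ext_iff, Complex.sub_re,
      Complex.sub_im, Complex.mul_re, Complex.mul_im, Complex.one_re, Complex.one_im,
      Complex.conj_re, Complex.conj_im, Complex.ofReal_re, Complex.ofReal_im,
      Complex.sq_norm, Complex.normSq_apply, hsymm B ω]
    constructor <;> ring
  refine ⟨h1, h2, ?_⟩
  rw [h2]
  have hl : 0 < ‖lam‖ ^ 2 := pow_pos (norm_pos_iff.mpr hlam) 2
  constructor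
  · rintro ⟨-, h⟩
    rw [Complex.ofReal_re] at h
    nlinarith
  · intro h
    refine ⟨h1, ?_⟩
    rw [Complex.ofReal_re]
    nlinarith
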